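/- Let τ_n = s_n ∘ ⋯ ∘ s_1 with s_i i.i.d. permutations of ℤ^d. The forward orbit of the origin, O⃗_n := ⋃_{0≤j≤n} τ_j({0}), equals the range {Y_0, Y_1, …, Y_n} of the Markov chain Y_j := τ_j(0); consequently |O⃗_n| ≤ n + 1, and if Y is a chain with return probability P_0(Y_{2k} = 0) ≥ c k^{−d/2} for all k, then for every ε > 0 one has P(|O⃗_n| ≤ εn) ≥ e^{−εn} for n large enough. -/

import Mathlib

set_option linter.unusedSectionVars false


open MeasureTheory ProbabilityTheory Filter

/-- The graph (ℓ¹) distance on `ℤ^d`. -/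
def dist1 {d : ℕ} (x y : Fin d → ℤ) : ℕ := ∑ i, (x i - y i).natAbs

namespace Stmt17Aux

variable {d : ℕ}

lemma dist1_symm (x y : Fin d → ℤ) : dist1 x y = dist1 y x := by
  unfold dist1
  refine Finset.sum_congr rfl fun i _ => ?_
  omega

lemma dist1_triangle (x y z : Fin d → ℤ) : dist1 x z ≤ dist1 x y + dist1 y z := by
  unfold dist1
  rw [← Finset.sum_add_distrib]
  refine Finset.sum_le_sum fun i _ => ?_
  omega

lemma ball_finite (R : ℕ) : ({z : Fin d → ℤ | dist1 z 0 ≤ R}).Finite := by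
  have hsub : {z : Fin d → ℤ | dist1 z 0 ≤ R} ⊆
      Set.pi Set.univ (fun _ : Fin d => Set.Icc (-(R:ℤ)) (R:ℤ)) := by
    intro z hz
    intro i _
    simp only [Set.mem_Icc]
    have h1 : (z i - 0).natAbs ≤ ∑ j, (z j - 0).natAbs :=
      Finset.single_le_sum (f := fun j => (z j - 0).natAbs) (fun j _ => Nat.zero_le _)
        (Finset.mem_univ i)
    have h2 : (z i - 0).natAbs ≤ R := le_trans h1 hz
    omega
  exact Set.Finite.subset (Set.Finite.pi fun _ => Set.finite_Icc _ _) hsub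

/-- The path-event: steps `a+1, …, a+n` follow the path `σ` (indexed by absolute time). -/
def Dset {Ω : Type*} (s : ℕ → Ω → Equiv.Perm (Fin d → ℤ)) (a n : ℕ) (σ : ℕ → Fin d → ℤ) :
    Set Ω :=
  ⋂ i ∈ Finset.Ioc a (a + n), {ω | s i ω (σ (i - 1)) = σ i}

/-- Extension of a finite path to `ℕ`. -/
def pext (n : ℕ) (v : Fin (n + 1) → Fin d → ℤ) : ℕ → Fin d → ℤ :=
  fun j => if h : j < n + 1 then v ⟨j, h⟩ else 0

lemma pext_eq (n : ℕ) (v : Fin (n + 1) → Fin d → ℤ) {j : ℕ} (hj : j ≤ n) :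
    pext n v j = v ⟨j, by omega⟩ := dif_pos (by omega)

section Main

variable {Ω : Type*} [MeasurableSpace Ω] (μ : Measure Ω)
  (s : ℕ → Ω → Equiv.Perm (Fin d → ℤ))
  (τ : ℕ → Ω → Equiv.Perm (Fin d → ℤ))

/-- measurability of single-step events -/
lemma step_meas (hτs : ∀ n ω, τ (n + 1) ω = s (n + 1) ω * τ n ω)
    (hmeasτ : ∀ (n : ℕ) (x : Fin d → ℤ), Measurable fun ω => τ n ω x)
    {i : ℕ} (hi : 1 ≤ i) (x y : Fin d → ℤ) :
    MeasurableSet {ω | s i ω x = y} := by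
  obtain ⟨j, rfl⟩ : ∃ j, i = j + 1 := ⟨i - 1, by omega⟩
  have hset : {ω | s (j+1) ω x = y} =
      ⋃ u : Fin d → ℤ, ({ω | τ j ω u = x} ∩ {ω | τ (j+1) ω u = y}) := by
    ext ω
    simp only [Set.mem_setOf_eq, Set.mem_iUnion, Set.mem_inter_iff]
    constructor
    · intro h
      refine ⟨(τ j ω).symm x, Equiv.apply_symm_apply _ _, ?_⟩
      rw [hτs j ω, Equiv.Perm.mul_apply, Equiv.apply_symm_apply, h]
    · rintro ⟨u, h1, h2⟩
      rw [← h1, ← h2, hτs j ω, Equiv.Perm.mul_apply]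
  rw [hset]
  exact MeasurableSet.iUnion fun u =>
    ((hmeasτ j u) (measurableSet_singleton x)).inter ((hmeasτ (j+1) u) (measurableSet_singleton y))

lemma Dset_meas (hτs : ∀ n ω, τ (n + 1) ω = s (n + 1) ω * τ n ω)
    (hmeasτ : ∀ (n : ℕ) (x : Fin d → ℤ), Measurable fun ω => τ n ω x)
    (a n : ℕ) (σ : ℕ → Fin d → ℤ) : MeasurableSet (Dset s a n σ) := by
  refine MeasurableSet.biInter (Finset.Ioc a (a+n)).countable_toSet fun i hi => ?_
  have hi' : a < i ∧ i ≤ a + n := Finset.mem_Ioc.1 hi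
  exact step_meas s τ hτs hmeasτ (by omega) _ _

/-- product formula from independence -/
lemma Pgen
    (hindep : iIndepFun (m := fun _ => (⊤ : MeasurableSpace (Equiv.Perm (Fin d → ℤ)))) s μ)
    (F : Finset ℕ) (g : ℕ → Set (Equiv.Perm (Fin d → ℤ))) :
    μ (⋂ i ∈ F, {ω | s i ω ∈ g i}) = ∏ i ∈ F, μ {ω | s i ω ∈ g i} :=
  hindep.measure_inter_preimage_eq_mul F (fun _ _ => MeasurableSpace.measurableSet_top)

lemma Dset_measure
    (hindep : iIndepFun (m := fun _ => (⊤ : MeasurableSpace (Equiv.Perm (Fin d → ℤ)))) s μ)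
    (hident : ∀ (i : ℕ) (A : Set (Equiv.Perm (Fin d → ℤ))),
      μ {ω | s i ω ∈ A} = μ {ω | s 0 ω ∈ A})
    (a n : ℕ) (σ : ℕ → Fin d → ℤ) :
    μ (Dset s a n σ) = ∏ i ∈ Finset.Ioc a (a + n), μ {ω | s 0 ω (σ (i-1)) = σ i} := by
  refine Eq.trans (Pgen μ s hindep (Finset.Ioc a (a+n)) (fun i => {p | p (σ (i-1)) = σ i})) ?_
  exact Finset.prod_congr rfl fun i _ => hident i {p | p (σ (i-1)) = σ i}

lemma Dset_split
    (hindep : iIndepFun (m := fun _ => (⊤ : MeasurableSpace (Equiv.Perm (Fin d → ℤ)))) s μ)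
    (L n : ℕ) (σ β : ℕ → Fin d → ℤ) :
    μ (Dset s 0 L σ ∩ Dset s L n β) = μ (Dset s 0 L σ) * μ (Dset s L n β) := by
  set g : ℕ → Set (Equiv.Perm (Fin d → ℤ)) :=
    fun i => if i ≤ L then {p | p (σ (i-1)) = σ i} else {p | p (β (i-1)) = β i} with hg
  have hD : Dset s 0 L σ = ⋂ i ∈ Finset.Ioc 0 (0 + L), {ω | s i ω ∈ g i} := by
    unfold Dset
    refine Set.iInter₂_congr fun i hi => ?_
    simp only [Finset.mem_Ioc] at hi
    simp [hg, if_pos (by omega : i ≤ L)]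
  have hC : Dset s L n β = ⋂ i ∈ Finset.Ioc L (L + n), {ω | s i ω ∈ g i} := by
    unfold Dset
    refine Set.iInter₂_congr fun i hi => ?_
    simp only [Finset.mem_Ioc] at hi
    simp [hg, if_neg (by omega : ¬ i ≤ L)]
  have hdisj : Disjoint (Finset.Ioc 0 (0 + L)) (Finset.Ioc L (L + n)) := by
    simp only [Finset.disjoint_left, Finset.mem_Ioc]
    omega
  have hunion : Finset.Ioc 0 (0 + L) ∪ Finset.Ioc L (L + n) = Finset.Ioc 0 (L + n) := by
    ext i
    simp only [Finset.mem_union, Finset.mem_Ioc]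
    omega
  have key : ∀ (F₁ F₂ : Finset ℕ) (u : ℕ → Set Ω),
      (⋂ i ∈ F₁ ∪ F₂, u i) = (⋂ i ∈ F₁, u i) ∩ ⋂ i ∈ F₂, u i := by
    intro F₁ F₂ u
    ext ω
    simp only [Set.mem_iInter, Set.mem_inter_iff, Finset.mem_union]
    constructor
    · intro h
      exact ⟨fun i hi => h i (Or.inl hi), fun i hi => h i (Or.inr hi)⟩
    · rintro ⟨h1, h2⟩ i (hi | hi)
      exacts [h1 i hi, h2 i hi]
  rw [hD, hC, ← key, Pgen μ s hindep _ g, Finset.prod_union hdisj,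
    ← Pgen μ s hindep _ g, ← Pgen μ s hindep _ g]

/-- trajectory determination -/
lemma Ltraj (hτs : ∀ n ω, τ (n + 1) ω = s (n + 1) ω * τ n ω)
    {ω : Ω} {a n : ℕ} {σ : ℕ → Fin d → ℤ}
    (hD : ω ∈ Dset s a n σ) (h0 : τ a ω 0 = σ a) :
    ∀ j, a ≤ j → j ≤ a + n → τ j ω 0 = σ j := by
  intro j haj hjn
  induction j, haj using Nat.le_induction with
  | base => exact h0
  | succ j hj ih =>
    have hih := ih (by omega)
    have hstep : s (j+1) ω (σ j) = σ (j+1) := by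
      have := Set.mem_iInter₂.1 hD (j+1) (by simp only [Finset.mem_Ioc]; omega)
      simpa using this
    rw [hτs j ω, Equiv.Perm.mul_apply, hih, hstep]

lemma mem_Dset_traj (hτs : ∀ n ω, τ (n + 1) ω = s (n + 1) ω * τ n ω)
    (ω : Ω) (a n : ℕ) (σ : ℕ → Fin d → ℤ) (hσ : ∀ j, a ≤ j → j ≤ a + n → σ j = τ j ω 0) :
    ω ∈ Dset s a n σ := by
  refine Set.mem_iInter₂.2 fun i hi => ?_
  simp only [Finset.mem_Ioc] at hi
  simp only [Set.mem_setOf_eq]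
  obtain ⟨j, rfl⟩ : ∃ j, i = j + 1 := ⟨i - 1, by omega⟩
  simp only [Nat.add_sub_cancel]
  rw [hσ j (by omega) (by omega), hσ (j+1) (by omega) (by omega), hτs j ω,
    Equiv.Perm.mul_apply]


/-- generic decomposition of a trajectory event over the finite paths -/
lemma GDecomp (hτ0 : ∀ ω, τ 0 ω = 1) (hτs : ∀ n ω, τ (n + 1) ω = s (n + 1) ω * τ n ω)
    (n : ℕ) (P : (ℕ → Fin d → ℤ) → Prop)
    (hP : ∀ σ σ', (∀ j ≤ n, σ j = σ' j) → P σ → P σ') :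
    {ω | P (fun j => τ j ω 0)} =
      ⋃ v : {v : Fin (n+1) → Fin d → ℤ // pext n v 0 = 0 ∧ P (pext n v)},
        Dset s 0 n (pext n v.1) := by
  ext ω
  have h00 : τ 0 ω 0 = 0 := by rw [hτ0]; rfl
  simp only [Set.mem_setOf_eq, Set.mem_iUnion]
  constructor
  · intro h
    set v : Fin (n+1) → Fin d → ℤ := fun j => τ j ω 0 with hv
    have hvt : ∀ j, j ≤ n → pext n v j = τ j ω 0 := fun j hj => by
      rw [pext_eq n v hj]
    refine ⟨⟨v, ?_, ?_⟩, ?_⟩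
    · rw [hvt 0 (Nat.zero_le n), h00]
    · exact hP _ _ (fun j hj => (hvt j hj).symm) h
    · exact mem_Dset_traj s τ hτs ω 0 n _ (fun j h0j hjn => hvt j (by omega))
  · rintro ⟨⟨v, hv0, hvP⟩, hD⟩
    have htr := Ltraj s τ hτs hD (by rw [h00, hv0])
    exact hP _ _ (fun j hj => (htr j (Nat.zero_le j) (by omega)).symm) hvP

lemma GDisj (hτ0 : ∀ ω, τ 0 ω = 1) (hτs : ∀ n ω, τ (n + 1) ω = s (n + 1) ω * τ n ω)
    (n : ℕ) (P : (ℕ → Fin d → ℤ) → Prop) :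
    Pairwise (Function.onFun Disjoint
      (fun v : {v : Fin (n+1) → Fin d → ℤ // pext n v 0 = 0 ∧ P (pext n v)} =>
        Dset s 0 n (pext n v.1))) := by
  intro v v' hne
  refine Set.disjoint_left.2 fun ω h1 h2 => hne ?_
  have h00 : τ 0 ω 0 = 0 := by rw [hτ0]; rfl
  have e1 := Ltraj s τ hτs h1 (by rw [h00, v.2.1])
  have e2 := Ltraj s τ hτs h2 (by rw [h00, v'.2.1])
  refine Subtype.ext (funext fun jf => ?_)
  have hj : (jf : ℕ) ≤ n := by omega
  have q1 : pext n v.1 jf = v.1 jf := by rw [pext_eq n v.1 hj]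
  have q2 : pext n v'.1 jf = v'.1 jf := by rw [pext_eq n v'.1 hj]
  rw [← q1, ← q2, ← e1 jf (Nat.zero_le _) (by omega), ← e2 jf (Nat.zero_le _) (by omega)]

lemma GMeasure (hτ0 : ∀ ω, τ 0 ω = 1) (hτs : ∀ n ω, τ (n + 1) ω = s (n + 1) ω * τ n ω)
    (hmeasτ : ∀ (n : ℕ) (x : Fin d → ℤ), Measurable fun ω => τ n ω x)
    (n : ℕ) (P : (ℕ → Fin d → ℤ) → Prop)
    (hP : ∀ σ σ', (∀ j ≤ n, σ j = σ' j) → P σ → P σ') :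
    μ {ω | P (fun j => τ j ω 0)} =
      ∑' v : {v : Fin (n+1) → Fin d → ℤ // pext n v 0 = 0 ∧ P (pext n v)},
        μ (Dset s 0 n (pext n v.1)) := by
  rw [GDecomp s τ hτ0 hτs n P hP]
  exact measure_iUnion (GDisj s τ hτ0 hτs n P)
    (fun v => Dset_meas s τ hτs hmeasτ 0 n _)

lemma Cshift
    (hindep : iIndepFun (m := fun _ => (⊤ : MeasurableSpace (Equiv.Perm (Fin d → ℤ)))) s μ)
    (hident : ∀ (i : ℕ) (A : Set (Equiv.Perm (Fin d → ℤ))),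
      μ {ω | s i ω ∈ A} = μ {ω | s 0 ω ∈ A})
    (L n : ℕ) (φ : ℕ → Fin d → ℤ) :
    μ (Dset s L n (fun j => φ (j - L))) = μ (Dset s 0 n φ) := by
  rw [Dset_measure μ s hindep hident, Dset_measure μ s hindep hident]
  rw [show Finset.Ioc L (L+n) = Finset.map (addLeftEmbedding L) (Finset.Ioc 0 (0+n)) by
    rw [Finset.map_add_left_Ioc, Nat.add_zero, Nat.zero_add]]
  rw [Finset.prod_map]
  refine Finset.prod_congr rfl fun i hi => ?_
  have hi' : 0 < i ∧ i ≤ 0 + n := Finset.mem_Ioc.1 hi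
  have e1 : L + i - 1 - L = i - 1 := by omega
  have e2 : L + i - L = i := by omega
  simp only [addLeftEmbedding_apply, e1, e2]

/-- the event that the walk returns to the origin at the end of each of the first `N`
blocks of length `l` -/
def Aset {Ω : Type*} (τ : ℕ → Ω → Equiv.Perm (Fin d → ℤ)) (l N : ℕ) : Set Ω :=
  ⋂ i ∈ Finset.range N, {ω | τ (l * (i + 1)) ω 0 = 0}

lemma Aset_meas (hmeasτ : ∀ (n : ℕ) (x : Fin d → ℤ), Measurable fun ω => τ n ω x)
    (l N : ℕ) : MeasurableSet (Aset τ l N) :=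
  MeasurableSet.biInter (Finset.range N).countable_toSet
    (fun i _ => (hmeasτ (l*(i+1)) 0) (measurableSet_singleton 0))

lemma Aset_zero (hτ0 : ∀ ω, τ 0 ω = 1) {l N : ℕ} {ω : Ω} (hω : ω ∈ Aset τ l N) :
    ∀ i ≤ N, τ (l * i) ω 0 = 0 := by
  intro i hi
  match i with
  | 0 => simp only [Nat.mul_zero]; rw [hτ0]; rfl
  | (i+1) => exact Set.mem_iInter₂.1 hω i (Finset.mem_range.2 (by omega))

lemma Aset_measure (hτ0 : ∀ ω, τ 0 ω = 1) (hτs : ∀ n ω, τ (n + 1) ω = s (n + 1) ω * τ n ω)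
    (hmeasτ : ∀ (n : ℕ) (x : Fin d → ℤ), Measurable fun ω => τ n ω x) (l N : ℕ) :
    μ (Aset τ l N) =
      ∑' v : {v : Fin (l*N+1) → Fin d → ℤ // pext (l*N) v 0 = 0 ∧
          (∀ i < N, pext (l*N) v (l*(i+1)) = 0)},
        μ (Dset s 0 (l*N) (pext (l*N) v.1)) := by
  have hP : ∀ σ σ' : ℕ → Fin d → ℤ, (∀ j ≤ l*N, σ j = σ' j) →
      (∀ i < N, σ (l*(i+1)) = 0) → (∀ i < N, σ' (l*(i+1)) = 0) := by
    intro σ σ' hagree hσ i hi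
    rw [← hagree (l*(i+1)) (Nat.mul_le_mul_left l (by omega))]
    exact hσ i hi
  have h := GMeasure μ s τ hτ0 hτs hmeasτ (l*N) (fun σ => ∀ i < N, σ (l*(i+1)) = 0) hP
  have hA : Aset τ l N = {ω | ∀ i < N, τ (l*(i+1)) ω 0 = 0} := by
    ext ω
    simp [Aset, Set.mem_iInter₂]
  rw [hA]
  exact h

lemma union_inter_measure {Ω : Type*} [MeasurableSpace Ω] (μ : Measure Ω) {ι : Type*}
    [Countable ι] (D : ι → Set Ω) (C : Set Ω) (hD : Pairwise (Function.onFun Disjoint D))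
    (hDm : ∀ v, MeasurableSet (D v)) (hCm : MeasurableSet C)
    (hsplit : ∀ v, μ (D v ∩ C) = μ (D v) * μ C) :
    μ ((⋃ v, D v) ∩ C) = μ (⋃ v, D v) * μ C := by
  rw [Set.iUnion_inter]
  rw [measure_iUnion (fun v v' hne => (hD hne).mono Set.inter_subset_left Set.inter_subset_left)
    (fun v => (hDm v).inter hCm)]
  rw [measure_iUnion hD hDm]
  calc ∑' v, μ (D v ∩ C) = ∑' v, μ (D v) * μ C := tsum_congr hsplit
    _ = (∑' v, μ (D v)) * μ C := ENNReal.tsum_mul_right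

/-- block event -/
def Cu' {Ω : Type*} (s : ℕ → Ω → Equiv.Perm (Fin d → ℤ)) (L l : ℕ)
    (u : {u : Fin (l+1) → Fin d → ℤ // pext l u 0 = 0 ∧ pext l u l = 0}) : Set Ω :=
  Dset s L l (fun j => pext l u.1 (j - L))

set_option maxHeartbeats 1000000 in
lemma Aset_lower [IsProbabilityMeasure μ]
    (hτ0 : ∀ ω, τ 0 ω = 1) (hτs : ∀ n ω, τ (n + 1) ω = s (n + 1) ω * τ n ω)
    (hmeasτ : ∀ (n : ℕ) (x : Fin d → ℤ), Measurable fun ω => τ n ω x)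
    (hindep : iIndepFun (m := fun _ => (⊤ : MeasurableSpace (Equiv.Perm (Fin d → ℤ)))) s μ)
    (hident : ∀ (i : ℕ) (A : Set (Equiv.Perm (Fin d → ℤ))),
      μ {ω | s i ω ∈ A} = μ {ω | s 0 ω ∈ A})
    (l : ℕ) : ∀ N : ℕ, μ {ω | τ l ω 0 = 0} ^ N ≤ μ (Aset τ l N) := by
  set ρ := μ {ω | τ l ω 0 = 0} with hρdef
  -- block-path description of ρ
  have hPE : ∀ σ σ' : ℕ → Fin d → ℤ, (∀ j ≤ l, σ j = σ' j) → σ l = 0 → σ' l = 0 := by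
    intro σ σ' hagree hσ
    rw [← hagree l le_rfl]; exact hσ
  have hρ : ρ = ∑' u : {u : Fin (l+1) → Fin d → ℤ // pext l u 0 = 0 ∧ pext l u l = 0},
      μ (Dset s 0 l (pext l u.1)) :=
    GMeasure μ s τ hτ0 hτs hmeasτ l (fun σ => σ l = 0) hPE
  intro N
  induction N with
  | zero =>
    simp only [pow_zero, Aset, Finset.range_zero]
    simp
  | succ N ih =>
    set L := l * N with hL
    set Et := {u : Fin (l+1) → Fin d → ℤ // pext l u 0 = 0 ∧ pext l u l = 0} with hEt
    have hCuDef : ∀ u : Et, Cu' s L l u = Dset s L l (fun j => pext l u.1 (j - L)) :=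
      fun u => rfl
    -- each piece
    have h1 : ∀ u : Et, μ (Aset τ l N ∩ Cu' s L l u) = μ (Aset τ l N) * μ (Dset s 0 l (pext l u.1)) := by
      intro u
      have hdec := GDecomp s τ hτ0 hτs (l*N) (fun σ => ∀ i < N, σ (l*(i+1)) = 0)
        (by
          intro σ σ' hagree hσ i hi
          rw [← hagree (l*(i+1)) (Nat.mul_le_mul_left l (by omega))]
          exact hσ i hi)
      have hA : Aset τ l N = {ω | ∀ i < N, τ (l*(i+1)) ω 0 = 0} := by
        ext ω; simp [Aset, Set.mem_iInter₂]
      have hmain := union_inter_measure μ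
        (fun v : {v : Fin (l*N+1) → Fin d → ℤ // pext (l*N) v 0 = 0 ∧
            ∀ i < N, pext (l*N) v (l*(i+1)) = 0} => Dset s 0 (l*N) (pext (l*N) v.1))
        (Cu' s L l u)
        (GDisj s τ hτ0 hτs (l*N) (fun σ => ∀ i < N, σ (l*(i+1)) = 0))
        (fun v => Dset_meas s τ hτs hmeasτ 0 (l*N) _)
        (Dset_meas s τ hτs hmeasτ L l _)
        (fun v => Dset_split μ s hindep (l*N) l (pext (l*N) v.1) (fun j => pext l u.1 (j - L)))
      rw [hA, hdec, hmain, hCuDef u, Cshift μ s hindep hident L l (pext l u.1)]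
    -- inclusion в Aset (N+1)
    have h2 : ⋃ u : Et, (Aset τ l N ∩ Cu' s L l u) ⊆ Aset τ l (N+1) := by
      rintro ω hω
      obtain ⟨u, hωA, hωC⟩ := Set.mem_iUnion.1 hω
      have hL0 : τ L ω 0 = 0 := Aset_zero τ hτ0 hωA N le_rfl
      have htr := Ltraj s τ hτs hωC (by
        rw [hL0, Nat.sub_self]
        exact u.2.1.symm)
      have hend : τ (L + l) ω 0 = 0 := by
        rw [htr (L+l) (by omega) le_rfl, Nat.add_sub_cancel_left]
        exact u.2.2
      refine Set.mem_iInter₂.2 fun i hi => ?_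
      have hi' : i < N + 1 := Finset.mem_range.1 hi
      rcases Nat.lt_succ_iff_lt_or_eq.1 hi' with h | h
      · exact Set.mem_iInter₂.1 hωA i (Finset.mem_range.2 h)
      · subst h
        show τ (l * (i+1)) ω 0 = 0
        rw [Nat.mul_succ]
        exact hend
    -- disjointness
    have h3 : Pairwise (Function.onFun Disjoint (fun u : Et => Aset τ l N ∩ Cu' s L l u)) := by
      intro u u' hne
      refine Set.disjoint_left.2 fun ω h1' h2' => hne ?_
      have hL0 : τ L ω 0 = 0 := Aset_zero τ hτ0 h1'.1 N le_rfl
      have e1 := Ltraj s τ hτs h1'.2 (by rw [hL0, Nat.sub_self]; exact u.2.1.symm)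
      have e2 := Ltraj s τ hτs h2'.2 (by rw [hL0, Nat.sub_self]; exact u'.2.1.symm)
      refine Subtype.ext (funext fun jf => ?_)
      have hj : (jf : ℕ) ≤ l := by omega
      have q1 : pext l u.1 jf = u.1 jf := by rw [pext_eq l u.1 hj]
      have q2 : pext l u'.1 jf = u'.1 jf := by rw [pext_eq l u'.1 hj]
      have r1 := e1 (L + jf) (by omega) (by omega)
      have r2 := e2 (L + jf) (by omega) (by omega)
      rw [Nat.add_sub_cancel_left] at r1 r2
      rw [← q1, ← q2, ← r1, ← r2]
    calc ρ ^ (N+1) = ρ ^ N * ρ := by ring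
      _ ≤ μ (Aset τ l N) * ρ := mul_le_mul_left ih ρ
      _ = μ (Aset τ l N) * ∑' u : Et, μ (Dset s 0 l (pext l u.1)) := by rw [← hρ]
      _ = ∑' u : Et, μ (Aset τ l N) * μ (Dset s 0 l (pext l u.1)) := ENNReal.tsum_mul_left.symm
      _ = ∑' u : Et, μ (Aset τ l N ∩ Cu' s L l u) := by
          exact tsum_congr fun u => (h1 u).symm
      _ = μ (⋃ u : Et, (Aset τ l N ∩ Cu' s L l u)) := by
          rw [measure_iUnion h3 (fun u => (Aset_meas τ hmeasτ l N).inter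
            (Dset_meas s τ hτs hmeasτ L l _))]
      _ ≤ μ (Aset τ l (N+1)) := measure_mono h2

lemma drift (M : ℕ) (hM : ∀ (i : ℕ) (ω : Ω) (x : Fin d → ℤ), dist1 x (s i ω x) ≤ M)
    (hτs : ∀ n ω, τ (n + 1) ω = s (n + 1) ω * τ n ω) :
    ∀ (a r : ℕ) (ω : Ω), dist1 (τ (a + r) ω 0) (τ a ω 0) ≤ r * M := by
  intro a r ω
  induction r with
  | zero => simp [dist1]
  | succ r ih =>
    have htri := dist1_triangle (τ (a + (r+1)) ω 0) (τ (a + r) ω 0) (τ a ω 0)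
    have hone : dist1 (τ (a + (r+1)) ω 0) (τ (a + r) ω 0) ≤ M := by
      have : τ (a + (r+1)) ω 0 = s (a + r + 1) ω (τ (a + r) ω 0) := by
        rw [show a + (r+1) = (a+r)+1 from rfl, hτs (a+r) ω, Equiv.Perm.mul_apply]
      rw [this, dist1_symm]
      exact hM (a+r+1) ω _
    have : (r+1) * M = r * M + M := by ring
    omega

lemma Aset_dist (M : ℕ) (hτ0 : ∀ ω, τ 0 ω = 1) (hτs : ∀ n ω, τ (n + 1) ω = s (n + 1) ω * τ n ω)
    (hM : ∀ (i : ℕ) (ω : Ω) (x : Fin d → ℤ), dist1 x (s i ω x) ≤ M)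
    {l N : ℕ} (hl : 1 ≤ l) {ω : Ω} (hω : ω ∈ Aset τ l N) :
    ∀ j ≤ l * N, dist1 (τ j ω 0) 0 ≤ l * M := by
  intro j hj
  have hjd : l * (j / l) + j % l = j := by
    have := Nat.div_add_mod j l
    omega
  have hiN : j / l ≤ N := by
    have h1 : j / l ≤ (l * N) / l := Nat.div_le_div_right hj
    rwa [Nat.mul_div_cancel_left N (by omega : 0 < l)] at h1
  have h0 : τ (l * (j / l)) ω 0 = 0 := Aset_zero τ hτ0 hω (j / l) hiN
  have hd := drift s τ M hM hτs (l * (j / l)) (j % l) ω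
  rw [hjd, h0] at hd
  have hrem : j % l ≤ l := le_of_lt (Nat.mod_lt j (by omega))
  exact le_trans hd (Nat.mul_le_mul_right M hrem)


lemma exists_k (d : ℕ) (c ε : ℝ) (hc : 0 < c) (hε : 0 < ε) :
    ∃ k : ℕ, 1 ≤ k ∧ -Real.log (c * (k:ℝ) ^ (-(d:ℝ)/2)) ≤ ε * k := by
  set a := |Real.log c| with ha
  set k : ℕ := 1 + Nat.ceil (2*a/ε) + Nat.ceil ((2*(d:ℝ)/ε)^2) with hk
  have hk1 : 1 ≤ k := by omega
  have hkpos : (0:ℝ) < k := by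
    have : 0 < k := by omega
    exact_mod_cast this
  refine ⟨k, hk1, ?_⟩
  have hlog : -Real.log (c * (k:ℝ) ^ (-(d:ℝ)/2)) = -Real.log c + ((d:ℝ)/2) * Real.log k := by
    rw [Real.log_mul (ne_of_gt hc) (ne_of_gt (Real.rpow_pos_of_pos hkpos _)),
      Real.log_rpow hkpos]
    ring
  rw [hlog]
  have hb1 : -Real.log c ≤ a := neg_le_abs _
  have hceil1 : 2*a/ε ≤ (k:ℝ) := by
    have h1 : (Nat.ceil (2*a/ε) : ℝ) ≤ (k:ℝ) := by
      have : Nat.ceil (2*a/ε) ≤ k := by omega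
      exact_mod_cast this
    exact le_trans (Nat.le_ceil _) h1
  have ha1 : a ≤ ε * k / 2 := by
    have h2 : 2*a ≤ (k:ℝ) * ε := (div_le_iff₀ hε).1 hceil1
    linarith
  have hsq : (2*(d:ℝ)/ε) ≤ Real.sqrt k := by
    have h1 : ((2*(d:ℝ)/ε)^2) ≤ (k:ℝ) := by
      refine le_trans (Nat.le_ceil _) ?_
      have : Nat.ceil ((2*(d:ℝ)/ε)^2) ≤ k := by omega
      exact_mod_cast this
    have h2 : Real.sqrt ((2*(d:ℝ)/ε)^2) ≤ Real.sqrt k := Real.sqrt_le_sqrt h1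
    rwa [Real.sqrt_sq (by positivity)] at h2
  have hlogk : Real.log (k:ℝ) ≤ 2 * Real.sqrt k := by
    have h0 : (0:ℝ) < Real.sqrt k := Real.sqrt_pos.2 hkpos
    have h1 : Real.log (Real.sqrt k) ≤ Real.sqrt k - 1 := Real.log_le_sub_one_of_pos h0
    have h2 : Real.log (k:ℝ) = 2 * Real.log (Real.sqrt k) := by
      rw [Real.log_sqrt (le_of_lt hkpos)]; ring
    linarith
  have hb2 : ((d:ℝ)/2) * Real.log k ≤ ε * k / 2 := by
    have hsqk : Real.sqrt k * Real.sqrt k = (k:ℝ) := Real.mul_self_sqrt (le_of_lt hkpos)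
    have hd0 : (0:ℝ) ≤ d := Nat.cast_nonneg d
    have hs0 : (0:ℝ) ≤ Real.sqrt k := Real.sqrt_nonneg _
    have e1 : ((d:ℝ)/2) * Real.log k ≤ (d:ℝ) * Real.sqrt k := by
      have := mul_le_mul_of_nonneg_left hlogk (by positivity : (0:ℝ) ≤ (d:ℝ)/2)
      linarith
    have e2 : 2*(d:ℝ) ≤ Real.sqrt k * ε := (div_le_iff₀ hε).1 hsq
    have e3 : (d:ℝ) * Real.sqrt k ≤ (ε/2) * ((k:ℝ)) := by
      nlinarith [hs0, e2, hsqk]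
    linarith
  linarith

end Main

end Stmt17Aux

open Stmt17Aux in
/-- For `τ_n = s_n ∘ ⋯ ∘ s_1` with `s_i` i.i.d. permutations of `ℤ^d` of range `≤ M`, the
forward orbit `O⃗_n = ⋃_{0≤j≤n} τ_j({0})` equals the range `{Y_0, …, Y_n}` of the chain
`Y_j = τ_j(0)`; hence `|O⃗_n| ≤ n + 1`, and if `P_0(Y_{2k} = 0) ≥ c k^{−d/2}` for all
`k ≥ 1`, then for every `ε > 0`, `P(|O⃗_n| ≤ εn) ≥ e^{−εn}` for `n` large enough. -/
theorem stmt17 {d : ℕ} {Ω : Type*} [MeasurableSpace Ω] (μ : Measure Ω)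
    [IsProbabilityMeasure μ]
    (s : ℕ → Ω → Equiv.Perm (Fin d → ℤ))
    (hindep : iIndepFun (m := fun _ => (⊤ : MeasurableSpace (Equiv.Perm (Fin d → ℤ)))) s μ)
    (hident : ∀ (i : ℕ) (A : Set (Equiv.Perm (Fin d → ℤ))),
      μ {ω | s i ω ∈ A} = μ {ω | s 0 ω ∈ A})
    (M : ℕ) (hM : ∀ (i : ℕ) (ω : Ω) (x : Fin d → ℤ), dist1 x (s i ω x) ≤ M)
    (τ : ℕ → Ω → Equiv.Perm (Fin d → ℤ))
    (hτ0 : ∀ ω, τ 0 ω = 1) (hτs : ∀ n ω, τ (n + 1) ω = s (n + 1) ω * τ n ω)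
    (hmeasτ : ∀ (n : ℕ) (x : Fin d → ℤ), Measurable fun ω => τ n ω x)
    (c : ℝ) (hc : 0 < c)
    (hheat : ∀ k : ℕ, 1 ≤ k →
      ENNReal.ofReal (c * (k : ℝ) ^ (-(d : ℝ) / 2)) ≤ μ {ω | τ (2 * k) ω 0 = 0}) :
    (∀ (m : ℕ) (ω : Ω), {x | ∃ j ≤ m, x = τ j ω 0} = (fun j => τ j ω 0) '' Set.Iic m) ∧
      (∀ (m : ℕ) (ω : Ω), {x | ∃ j ≤ m, x = τ j ω 0}.ncard ≤ m + 1) ∧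
      ∀ ε > (0 : ℝ), ∀ᶠ m : ℕ in atTop,
        ENNReal.ofReal (Real.exp (-ε * m))
          ≤ μ {ω | ({x | ∃ j ≤ m, x = τ j ω 0}.ncard : ℝ) ≤ ε * m} := by
  constructor
  · intro m ω
    ext x
    simp only [Set.mem_setOf_eq, Set.mem_image, Set.mem_Iic]
    constructor
    · rintro ⟨j, hj, rfl⟩; exact ⟨j, hj, rfl⟩
    · rintro ⟨j, hj, hx⟩; exact ⟨j, hj, hx.symm⟩
  constructor
  · intro m ω
    have him : {x | ∃ j ≤ m, x = τ j ω 0} = (fun j => τ j ω 0) '' Set.Iic m := by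
      ext x
      simp only [Set.mem_setOf_eq, Set.mem_image, Set.mem_Iic]
      constructor
      · rintro ⟨j, hj, rfl⟩; exact ⟨j, hj, rfl⟩
      · rintro ⟨j, hj, hx⟩; exact ⟨j, hj, hx.symm⟩
    rw [him]
    have h1 : ((fun j => τ j ω 0) '' Set.Iic m).ncard ≤ (Set.Iic m).ncard :=
      Set.ncard_image_le (Set.finite_Iic m)
    have h2 : (Set.Iic m).ncard = m + 1 := by
      rw [← Finset.coe_Iic, Set.ncard_coe_finset, Nat.card_Iic]
    omega
  · intro ε hε
    obtain ⟨k, hk1, hkq⟩ := exists_k d c ε hc hε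
    set l := 2*k with hl
    have hl1 : 1 ≤ l := by omega
    set x := c * (k:ℝ) ^ (-(d:ℝ)/2) with hx
    have hk0R : (0:ℝ) < k := by
      have : 0 < k := by omega
      exact_mod_cast this
    have hx0 : 0 < x := mul_pos hc (Real.rpow_pos_of_pos hk0R _)
    have hheat' : ENNReal.ofReal x ≤ μ {ω | τ l ω 0 = 0} := hheat k hk1
    have hx1 : x ≤ 1 := by
      by_contra h
      push_neg at h
      have h2 : (1:ENNReal) < ENNReal.ofReal x := ENNReal.one_lt_ofReal.2 h
      have h3 : ENNReal.ofReal x ≤ 1 := le_trans hheat' prob_le_one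
      exact absurd (lt_of_lt_of_le h2 h3) (lt_irrefl _)
    set C := ({z : Fin d → ℤ | dist1 z 0 ≤ l * M}).ncard with hC
    rw [eventually_atTop]
    refine ⟨max (2*k) (Nat.ceil ((C:ℝ)/ε)) + 1, fun m hm => ?_⟩
    have hm2k : 2*k ≤ m := by omega
    have hmC : (C:ℝ) ≤ ε * m := by
      have h1 : Nat.ceil ((C:ℝ)/ε) ≤ m := by omega
      have h2 : (C:ℝ)/ε ≤ (m:ℝ) := le_trans (Nat.le_ceil _) (by exact_mod_cast h1)
      have h3 : (C:ℝ) ≤ (m:ℝ) * ε := (div_le_iff₀ hε).1 h2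
      linarith
    set N := m / l + 1 with hN
    have hmlN : m ≤ l * N := by
      have hdm := Nat.div_add_mod m l
      have hmod : m % l < l := Nat.mod_lt m (by omega)
      have h2 : l * N = l * (m/l) + l := by rw [hN, Nat.mul_add, Nat.mul_one]
      omega
    have hincl : Aset τ l N ⊆
        {ω | (({x' | ∃ j ≤ m, x' = τ j ω 0}).ncard : ℝ) ≤ ε * m} := by
      intro ω hω
      have hsub : {x' | ∃ j ≤ m, x' = τ j ω 0} ⊆ {z : Fin d → ℤ | dist1 z 0 ≤ l * M} := by
        rintro z ⟨j, hj, rfl⟩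
        exact Aset_dist s τ M hτ0 hτs hM hl1 hω j (le_trans hj hmlN)
      have hcard : ({x' | ∃ j ≤ m, x' = τ j ω 0}).ncard ≤ C :=
        Set.ncard_le_ncard hsub (ball_finite (l*M))
      have : (({x' | ∃ j ≤ m, x' = τ j ω 0}).ncard : ℝ) ≤ (C:ℝ) := by exact_mod_cast hcard
      exact le_trans this hmC
    have hxN : Real.exp (-ε*m) ≤ x^N := by
      rw [← Real.exp_log hx0, ← Real.exp_nat_mul]
      apply Real.exp_le_exp.2
      have hNle : (N:ℝ) ≤ (m:ℝ)/(l:ℝ) + 1 := by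
        rw [hN]
        push_cast
        have := Nat.cast_div_le (α := ℝ) (m := m) (n := l)
        linarith
      set q := -Real.log x with hqdef
      have hq : 0 ≤ q := by
        have := Real.log_nonpos (le_of_lt hx0) hx1
        linarith
      have hqk : q ≤ ε * k := by rw [hqdef, hx]; exact hkq
      have key : (N:ℝ) * q ≤ ε * m := by
        have hNlb : (0:ℝ) ≤ (N:ℝ) := Nat.cast_nonneg N
        have hll : (l:ℝ) = 2*(k:ℝ) := by rw [hl]; push_cast; ring
        have h2k : (2*(k:ℝ)) ≤ (m:ℝ) := by exact_mod_cast hm2k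
        have hN2 : (N:ℝ) * (2*(k:ℝ)) ≤ (m:ℝ) + 2*(k:ℝ) := by
          rw [hll] at hNle
          have h2kpos : (0:ℝ) < 2*(k:ℝ) := by linarith
          calc (N:ℝ)*(2*(k:ℝ)) ≤ ((m:ℝ)/(2*(k:ℝ))+1)*(2*(k:ℝ)) :=
                mul_le_mul_of_nonneg_right hNle (le_of_lt h2kpos)
            _ = (m:ℝ) + 2*(k:ℝ) := by field_simp
        nlinarith [mul_le_mul_of_nonneg_left hqk hNlb, hN2, hq, hε.le, hk0R]
      have hlogq : (N:ℝ) * Real.log x = -((N:ℝ) * q) := by rw [hqdef]; ring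
      linarith [key, hlogq]
    calc ENNReal.ofReal (Real.exp (-ε*m)) ≤ ENNReal.ofReal (x^N) :=
          ENNReal.ofReal_le_ofReal hxN
      _ = (ENNReal.ofReal x)^N := (ENNReal.ofReal_pow (le_of_lt hx0) N)
      _ ≤ (μ {ω | τ l ω 0 = 0})^N := pow_le_pow_left' hheat' N
      _ ≤ μ (Aset τ l N) := Aset_lower μ s τ hτ0 hτs hmeasτ hindep hident l N
      _ ≤ μ {ω | (({x' | ∃ j ≤ m, x' = τ j ω 0}).ncard : ℝ) ≤ ε * m} := measure_mono hincl
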